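/- Fix x ∈ U, multi-indices α, β, γ ∈ ℤ^n and 1 ≤ u, v ≤ k. Assume that each h_{αβu} is differentiable at x and that for every pair of multi-indices μ, ν ∈ ℤ^n and every pair of indices 1 ≤ u', v' ≤ k the family (δ ∈ ℤ^n ↦ h_{δνv'}(x) · h_{μδu'}(x)) is summable, so that R_{μνu'v'}(x) is defined. Then R_{(α+β)γuv}(x) = R_{α(γ−β)uv}(x) + R_{β(γ−α)uv}(x). -/

import Mathlib

/-- `h_{αβu} = ∑_{s=1}^n α_s · f_{s,(β−α+e_s),u}`. -/
noncomputable def hfun {n k : ℕ} (f : Fin n → (Fin n → ℤ) → Fin k → (Fin k → ℝ) → ℝ)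
    (α β : Fin n → ℤ) (u : Fin k) (x : Fin k → ℝ) : ℝ :=
  ∑ s, (α s : ℝ) * f s (β - α + Pi.single s 1) u x

/-- `R_{αβuv} = ∂h_{αβv}/∂x_u − ∂h_{αβu}/∂x_v + ∑_{t∈ℤⁿ} h_{tβv} h_{αtu} − ∑_{t∈ℤⁿ} h_{tβu} h_{αtv}`. -/
noncomputable def Rfun {n k : ℕ} (f : Fin n → (Fin n → ℤ) → Fin k → (Fin k → ℝ) → ℝ)
    (α β : Fin n → ℤ) (u v : Fin k) (x : Fin k → ℝ) : ℝ :=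
  fderiv ℝ (hfun f α β v) x (Pi.single u 1) - fderiv ℝ (hfun f α β u) x (Pi.single v 1)
    + ∑' t : Fin n → ℤ, hfun f t β v x * hfun f α t u x
    - ∑' t : Fin n → ℤ, hfun f t β u x * hfun f α t v x

lemma hfun_add {n k : ℕ} (f : Fin n → (Fin n → ℤ) → Fin k → (Fin k → ℝ) → ℝ)
    (α β γ : Fin n → ℤ) (u : Fin k) (x : Fin k → ℝ) :
    hfun f (α + β) γ u x = hfun f α (γ - β) u x + hfun f β (γ - α) u x := by
  unfold hfun
  rw [← Finset.sum_add_distrib]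
  refine Finset.sum_congr rfl fun s _ => ?_
  have h1 : (γ - β) - α + Pi.single s 1 = γ - (α + β) + Pi.single s 1 := by abel
  have h2 : (γ - α) - β + Pi.single s 1 = γ - (α + β) + Pi.single s 1 := by abel
  rw [h1, h2, Pi.add_apply]
  push_cast
  ring

set_option maxHeartbeats 1000000 in

lemma key_tsum {n : ℕ} (A B : (Fin n → ℤ) → (Fin n → ℤ) → ℝ)
    (hA : ∀ μ ν γ', A (μ + ν) γ' = A μ (γ' - ν) + A ν (γ' - μ))
    (hB : ∀ μ ν γ', B (μ + ν) γ' = B μ (γ' - ν) + B ν (γ' - μ))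
    (hS : ∀ μ ν, Summable (fun δ : Fin n → ℤ => A δ ν * B μ δ))
    (hS' : ∀ μ ν, Summable (fun δ : Fin n → ℤ => B δ ν * A μ δ))
    (α β γ : Fin n → ℤ) :
    (∑' t, A t γ * B (α + β) t) - (∑' t, B t γ * A (α + β) t) =
      ((∑' t, A t (γ - β) * B α t) - (∑' t, B t (γ - β) * A α t))
        + ((∑' t, A t (γ - α) * B β t) - (∑' t, B t (γ - α) * A β t)) := by
  set F := fun t => A t γ * B (α + β) t - B t γ * A (α + β) t with hFdef
  set H1 := fun t => A t (γ - β) * B α t - B t (γ - β) * A α t with hH1def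
  set H2 := fun t => A t (γ - α) * B β t - B t (γ - α) * A β t with hH2def
  set C1 := fun t : Fin n → ℤ => A β (γ - t) * B α t - B β (γ - t) * A α t with hC1def
  have hFs : Summable F := (hS (α + β) γ).sub (hS' (α + β) γ)
  have hH1s : Summable H1 := (hS α (γ - β)).sub (hS' α (γ - β))
  have hH2s : Summable H2 := (hS β (γ - α)).sub (hS' β (γ - α))
  have hpt : ∀ t, F t = H1 (t - β) + H2 (t - α) + (C1 (t - β) - C1 (γ + α - t)) := by
    intro t
    have e1u := hB α β t
    have e1v := hA α β t
    have e3v := hA (t - β) β γ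
    have e3u := hB (t - β) β γ
    have e4v := hA (t - α) α γ
    have e4u := hB (t - α) α γ
    rw [sub_add_cancel] at e3v e3u e4v e4u
    rw [show γ - (t - α) = γ + α - t from by abel] at e4v e4u
    have harg : γ - (γ + α - t) = t - α := by abel
    simp only [hFdef, hH1def, hH2def, hC1def, harg]
    linear_combination (A t γ) * e1u - (B t γ) * e1v + (B α (t - β)) * e3v
      - (A α (t - β)) * e3u + (B β (t - α)) * e4v - (A β (t - α)) * e4u
  have hs1 : Summable (fun t => H1 (t - β)) := (Equiv.subRight β).summable_iff.mpr hH1s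
  have hs2 : Summable (fun t => H2 (t - α)) := (Equiv.subRight α).summable_iff.mpr hH2s
  have hK : Summable (fun t => C1 (t - β) - C1 (γ + α - t)) := by
    refine ((hFs.sub hs1).sub hs2).congr fun t => ?_
    have := hpt t; linarith
  have hKzero : (∑' t, (C1 (t - β) - C1 (γ + α - t))) = 0 := by
    set K := fun t => C1 (t - β) - C1 (γ + α - t) with hKdef
    have hneg : ∀ t, K (γ + α + β - t) = -K t := by
      intro t
      simp only [hKdef]
      rw [show γ + α + β - t - β = γ + α - t from by abel,
        show γ + α - (γ + α + β - t) = t - β from by abel]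
      ring
    have he : ∑' t, K (γ + α + β - t) = ∑' t, K t := (Equiv.subLeft (γ + α + β)).tsum_eq K
    have h2 : ∑' t, K (γ + α + β - t) = ∑' t, -K t := tsum_congr fun t => hneg t
    rw [tsum_neg] at h2
    linarith [he.symm.trans h2]
  have ht1 : ∑' t, H1 (t - β) = ∑' t, H1 t := (Equiv.subRight β).tsum_eq H1
  have ht2 : ∑' t, H2 (t - α) = ∑' t, H2 t := (Equiv.subRight α).tsum_eq H2
  have hmain : ∑' t, F t = (∑' t, H1 t) + (∑' t, H2 t) := by
    have h1 : ∑' t, F t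
        = ∑' t, (H1 (t - β) + H2 (t - α) + (C1 (t - β) - C1 (γ + α - t))) :=
      tsum_congr hpt
    rw [Summable.tsum_add (hs1.add hs2) hK, Summable.tsum_add hs1 hs2, hKzero, ht1, ht2, add_zero] at h1
    exact h1
  rw [← Summable.tsum_sub (hS (α + β) γ) (hS' (α + β) γ), ← Summable.tsum_sub (hS α (γ - β)) (hS' α (γ - β)),
    ← Summable.tsum_sub (hS β (γ - α)) (hS' β (γ - α))]
  exact hmain


/-- If each `h_{μνu'}` is differentiable at `x` and all the families defining the `R`'s at `x`
are summable, then `R_{(α+β)γuv}(x) = R_{α(γ−β)uv}(x) + R_{β(γ−α)uv}(x)`. -/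
theorem stmt_11 (n k : ℕ) (hn : 1 ≤ n) (hk : 1 ≤ k)
    (U : Set (Fin k → ℝ)) (hUopen : IsOpen U) (hU0 : (0 : Fin k → ℝ) ∈ U)
    (f : Fin n → (Fin n → ℤ) → Fin k → (Fin k → ℝ) → ℝ)
    (hf : ∀ r α u, AnalyticOnNhd ℝ (f r α u) U)
    (x : Fin k → ℝ) (hx : x ∈ U)
    (α β γ : Fin n → ℤ) (u v : Fin k)
    (hdiff : ∀ (μ ν : Fin n → ℤ) (u' : Fin k), DifferentiableAt ℝ (hfun f μ ν u') x)
    (hsum : ∀ (μ ν : Fin n → ℤ) (u' v' : Fin k),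
      Summable (fun δ : Fin n → ℤ => hfun f δ ν v' x * hfun f μ δ u' x)) :
    Rfun f (α + β) γ u v x = Rfun f α (γ - β) u v x + Rfun f β (γ - α) u v x := by
  have hder : ∀ w : Fin k, fderiv ℝ (hfun f (α + β) γ w) x =
      fderiv ℝ (hfun f α (γ - β) w) x + fderiv ℝ (hfun f β (γ - α) w) x := by
    intro w
    have heq : hfun f (α + β) γ w = fun y => hfun f α (γ - β) w y + hfun f β (γ - α) w y := by
      funext y; exact hfun_add f α β γ w y
    rw [heq, fderiv_fun_add (hdiff α (γ - β) w) (hdiff β (γ - α) w)]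
  have hkey := key_tsum (fun a b => hfun f a b v x) (fun a b => hfun f a b u x)
    (fun μ ν γ' => hfun_add f μ ν γ' v x) (fun μ ν γ' => hfun_add f μ ν γ' u x)
    (fun μ ν => hsum μ ν u v) (fun μ ν => hsum μ ν v u) α β γ
  simp only [Rfun, hder u, hder v, ContinuousLinearMap.add_apply]
  linarith [hkey]
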